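/- Let R be a nonzero commutative ring with a subset S and a family T of elements of R satisfying (N1), (N2), (N3) as above, and suppose |S| ≥ 2. Then every element s ∈ S is idempotent: s·s = s. -/
import Mathlib


/-- Under (N1), (N2), (N3) and `S` having at least two elements,
every element of `S` is idempotent. -/
theorem stmt_2 {R : Type*} [CommRing R] [Nontrivial R] (S T : Set R)
    (hS : ∃ a ∈ S, ∃ b ∈ S, a ≠ b)
    (hN1 : ∀ x : R, ∃! F : Finset R, ↑F ⊆ S ∧ ∑ a ∈ F, a = x)
    (hN2 : ∀ t ∈ T, ∀ s ∈ S, t * s = 0 ∨ t * s = s)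
    (hN3 : ∀ s ∈ S, ∀ s' ∈ S, s ≠ s' →
      ∃ t ∈ T, (t * s = 0 ∧ t * s' ≠ 0) ∨ (t * s ≠ 0 ∧ t * s' = 0)) :
    ∀ s ∈ S, s * s = s := by
  classical
  -- 0 ∉ S
  have h0 : (0:R) ∉ S := by
    intro h0
    obtain ⟨F, _, hu⟩ := hN1 0
    have h1 : ({0} : Finset R) = (∅ : Finset R) := by
      rw [hu {0} ⟨by simpa using h0, by simp⟩, hu ∅ ⟨by simp, by simp⟩]
    simp at h1
  -- distinct elements of S are orthogonal
  have horth : ∀ a ∈ S, ∀ b ∈ S, a ≠ b → a * b = 0 := by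
    intro a ha b hb hab
    obtain ⟨t, ht, h⟩ := hN3 a ha b hb hab
    rcases h with ⟨h1, h2⟩ | ⟨h1, h2⟩
    · have hb' : t * b = b := (hN2 t ht b hb).resolve_left h2
      calc a * b = a * (t * b) := by rw [hb']
        _ = (t * a) * b := by ring
        _ = 0 := by rw [h1, zero_mul]
    · have ha' : t * a = a := (hN2 t ht a ha).resolve_left h1
      calc a * b = (t * a) * b := by rw [ha']
        _ = (t * b) * a := by ring
        _ = 0 := by rw [h2, zero_mul]
  intro s hs
  obtain ⟨F, ⟨hFS, hFsum⟩, hFu⟩ := hN1 (s * s)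
  -- every element of F equals s
  have hF1 : ∀ a ∈ F, a = s := by
    intro a haF
    by_contra hne
    have haS : a ∈ S := hFS haF
    have ha0 : a ≠ 0 := fun h => h0 (h ▸ haS)
    obtain ⟨t, ht, h⟩ := hN3 s hs a haS (fun h => hne h.symm)
    set F' := F.filter (fun a => t * a = a) with hF'def
    have hF'S : ↑F' ⊆ S := by
      intro x hx
      simp only [hF'def, Finset.coe_filter, Set.mem_setOf_eq] at hx
      exact hFS hx.1
    have hsum : ∑ a ∈ F', a = t * (s * s) := by
      rw [← hFsum, Finset.mul_sum,
        ← Finset.sum_filter_add_sum_filter_not F (fun a => t * a = a) (fun a => t * a)]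
      have h1 : ∑ a ∈ F.filter (fun a => ¬ t * a = a), t * a = 0 := by
        refine Finset.sum_eq_zero ?_
        intro x hx
        simp only [Finset.mem_filter] at hx
        exact (hN2 t ht x (hFS hx.1)).resolve_right hx.2
      rw [h1, add_zero]
      exact Finset.sum_congr rfl (fun x hx => ((Finset.mem_filter.mp hx).2).symm)
    rcases h with ⟨hts, hta⟩ | ⟨hts, hta⟩
    · -- t*s = 0, t*a = a ; then t*(s*s) = 0 so F' = ∅, but a ∈ F'
      have hta' : t * a = a := (hN2 t ht a haS).resolve_left hta
      have hz : t * (s * s) = 0 := by rw [← mul_assoc, hts, zero_mul]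
      obtain ⟨F0, _, hF0u⟩ := hN1 0
      have h1 : F' = (∅ : Finset R) := by
        rw [hF0u F' ⟨hF'S, by rw [hsum, hz]⟩, hF0u ∅ ⟨by simp, by simp⟩]
      have : a ∈ F' := Finset.mem_filter.mpr ⟨haF, hta'⟩
      rw [h1] at this
      exact absurd this (Finset.notMem_empty a)
    · -- t*s = s, t*a = 0 ; then t*(s*s) = s*s so F' = F, but a ∉ F'
      have hts' : t * s = s := (hN2 t ht s hs).resolve_left hts
      have hz : t * (s * s) = s * s := by rw [← mul_assoc, hts']
      have h1 : F' = F := hFu F' ⟨hF'S, by rw [hsum, hz]⟩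
      have : a ∈ F' := h1.symm ▸ haF
      have := (Finset.mem_filter.mp this).2
      rw [hta] at this
      exact ha0 this.symm
  rcases F.eq_empty_or_nonempty with hFe | ⟨a, haF⟩
  · -- then s*s = 0, so s = s*1 = 0, contradiction
    exfalso
    have hss : s * s = 0 := by rw [← hFsum, hFe, Finset.sum_empty]
    obtain ⟨G, ⟨hGS, hGsum⟩, _⟩ := hN1 1
    have : s = 0 := by
      calc s = s * 1 := (mul_one s).symm
        _ = ∑ b ∈ G, s * b := by rw [← hGsum, Finset.mul_sum]
        _ = 0 := Finset.sum_eq_zero (by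
            intro b hb
            by_cases hbs : b = s
            · rw [hbs]; exact hss
            · exact horth s hs b (hGS hb) (fun h => hbs h.symm))
    exact h0 (this ▸ hs)
  · have : F = {s} := by
      rw [Finset.eq_singleton_iff_unique_mem]
      exact ⟨(hF1 a haF) ▸ haF, hF1⟩
    rw [← hFsum, this, Finset.sum_singleton]
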